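/- Any quantum ID-code with error ε for a Hilbert space K yields, via fingerprinting, a classical ID-code: if (E, D) is a quantum ID-code with error ε for K through channel N, and {|ψ_i⟩}_{i=1}^N ⊂ K is a set of unit vectors with |⟨ψ_i|ψ_j⟩|² ≤ δ for i ≠ j, then {(E(ψ_i), D_{ψ_i})}_{i=1}^N is a classical ID-code for N with error of first kind λ₁ = ε and error of second kind λ₂ = δ + ε. -/

import Mathlib

open Matrix
open scoped Kronecker ComplexOrder
noncomputable section

/-- The Choi matrix of a linear map between matrix algebras. -/
def choi {a b : ℕ} (Φ : Matrix (Fin a) (Fin a) ℂ →ₗ[ℂ] Matrix (Fin b) (Fin b) ℂ) :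
    Matrix (Fin a × Fin b) (Fin a × Fin b) ℂ :=
  ∑ i, ∑ j, (Matrix.single i j (1 : ℂ)) ⊗ₖ Φ (Matrix.single i j 1)

/-- A linear map between matrix algebras is cptp iff its Choi matrix is positive
semidefinite (complete positivity) and it preserves the trace. -/
def IsCPTP {a b : ℕ} (Φ : Matrix (Fin a) (Fin a) ℂ →ₗ[ℂ] Matrix (Fin b) (Fin b) ℂ) : Prop :=
  (choi Φ).PosSemidef ∧ ∀ ρ, (Φ ρ).trace = ρ.trace

/-- A density operator: positive semidefinite with unit trace. -/
def IsState {d : ℕ} (ρ : Matrix (Fin d) (Fin d) ℂ) : Prop := ρ.PosSemidef ∧ ρ.trace = 1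

/-- The trace norm `‖X‖₁ = tr √(XᴴX)`. -/
def traceNorm {d : ℕ} (X : Matrix (Fin d) (Fin d) ℂ) : ℝ :=
  (((Matrix.posSemidef_conjTranspose_mul_self X).1.eigenvectorUnitary.1 *
    diagonal (((↑) : ℝ → ℂ) ∘ (Real.sqrt ∘ (Matrix.posSemidef_conjTranspose_mul_self X).1.eigenvalues)) *
    (star (Matrix.posSemidef_conjTranspose_mul_self X).1.eigenvectorUnitary : Matrix (Fin d) (Fin d) ℂ)).trace).re

/-- Rank-one (outer product) matrix `|v⟩⟨v|`. -/
def outer {ι : Type*} [Fintype ι] (v : ι → ℂ) : Matrix ι ι ℂ :=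
  Matrix.vecMulVec v (star v)

lemma outer_trace_eq {ι : Type*} [Fintype ι] (ψ φ : ι → ℂ) :
    ((outer ψ * outer φ).trace).re
      = ‖∑ x, (starRingEnd ℂ) (ψ x) * φ x‖ ^ 2 := by
  have h : (outer ψ * outer φ).trace
      = (starRingEnd ℂ) (∑ x, (starRingEnd ℂ) (ψ x) * φ x)
        * (∑ x, (starRingEnd ℂ) (ψ x) * φ x) := by
    simp only [outer, Matrix.trace, Matrix.diag, Matrix.mul_apply,
      Matrix.vecMulVec_apply, Pi.star_apply, RCLike.star_def, map_sum, _root_.map_mul,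
      RingHomCompTriple.comp_apply, RingHom.id_apply, Finset.mul_sum, Finset.sum_mul]
    rw [Finset.sum_comm]
    apply Finset.sum_congr rfl; intro i _
    apply Finset.sum_congr rfl; intro j _
    ring
  rw [h, Complex.conj_mul']
  rw [show ((‖∑ x, (starRingEnd ℂ) (ψ x) * φ x‖ : ℝ) ^ 2 : ℂ) = (((‖∑ x, (starRingEnd ℂ) (ψ x) * φ x‖ ^ 2 : ℝ)) : ℂ) by push_cast; ring, Complex.ofReal_re]

/-- A quantum ID-code with error `ε` composed with a fingerprinting set of pairwise
almost orthogonal unit vectors (`|⟨ψᵢ|ψⱼ⟩|² ≤ δ` for `i ≠ j`) yields a classical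
ID-code with errors of first kind `ε` and of second kind `δ + ε`. -/
theorem quantum_id_code_to_classical_id_code
    {a b k : ℕ} (Φ : Matrix (Fin a) (Fin a) ℂ →ₗ[ℂ] Matrix (Fin b) (Fin b) ℂ)
    (hΦ : IsCPTP Φ)
    (E : (Fin k → ℂ) → Matrix (Fin a) (Fin a) ℂ)
    (D : (Fin k → ℂ) → Matrix (Fin b) (Fin b) ℂ)
    (hE : ∀ ψ : Fin k → ℂ, (∑ i, ‖ψ i‖ ^ 2) = 1 → IsState (E ψ))
    (hD0 : ∀ φ, (D φ).PosSemidef)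
    (hD1 : ∀ φ, ((1 : Matrix (Fin b) (Fin b) ℂ) - D φ).PosSemidef)
    (ε : ℝ)
    (hqid : ∀ ψ φ : Fin k → ℂ, (∑ i, ‖ψ i‖ ^ 2) = 1 →
      (∑ i, ‖φ i‖ ^ 2) = 1 →
      |((outer ψ * outer φ).trace).re - ((Φ (E ψ) * D φ).trace).re| ≤ ε)
    {N : ℕ} (ψs : Fin N → (Fin k → ℂ)) (δ : ℝ)
    (hunit : ∀ i, (∑ x, ‖ψs i x‖ ^ 2) = 1)
    (hfp : ∀ i j, i ≠ j → ‖∑ x, (starRingEnd ℂ) (ψs i x) * ψs j x‖ ^ 2 ≤ δ) :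
    (∀ i, 1 - ε ≤ ((Φ (E (ψs i)) * D (ψs i)).trace).re) ∧
    (∀ i j, i ≠ j → ((Φ (E (ψs i)) * D (ψs j)).trace).re ≤ δ + ε) := by
  constructor
  · intro i
    have h := hqid (ψs i) (ψs i) (hunit i) (hunit i)
    have ht : ((outer (ψs i) * outer (ψs i)).trace).re = 1 := by
      rw [outer_trace_eq]
      have : (∑ x, (starRingEnd ℂ) (ψs i x) * ψs i x)
          = ((∑ x, ‖ψs i x‖ ^ 2 : ℝ) : ℂ) := by
        push_cast
        apply Finset.sum_congr rfl
        intro x _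
        rw [Complex.conj_mul']
      rw [this, hunit i]
      simp
    rw [ht] at h
    have := abs_le.mp h
    linarith [this.2]
  · intro i j hij
    have h := hqid (ψs i) (ψs j) (hunit i) (hunit j)
    rw [outer_trace_eq] at h
    have := abs_le.mp h
    have hf := hfp i j hij
    linarith [this.1]
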